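/- Let A be an n×n complex matrix and let Aᴴ be its conjugate transpose. For x ∈ ℂⁿ, x belongs to ⨆_{λ : Re λ < 0} ker((A − λI)ⁿ) (the sum of maximal generalized eigenspaces of A over eigenvalues with negative real part) if and only if ⟨x, w⟩ = 0 for every λ ∈ ℂ with Re λ ≥ 0 and every w ∈ ker((Aᴴ − \overline{λ} I)ⁿ). That is, the stable subspace of the linear system ẋ = Ax is exactly the joint zero level set of the (generalized) Koopman eigenfunctions φ(x) = ⟨x, w⟩ associated with eigenvalues of nonnegative real part. -/

import Mathlib

open scoped BigOperators Matrix

section Aux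

variable {n : ℕ}

private lemma Matrix.toEuclideanLin_apply_piLp_equiv_symm (M : Matrix (Fin n) (Fin n) ℂ)
    (v : Fin n → ℂ) : Matrix.toEuclideanLin M ((WithLp.equiv 2 (Fin n → ℂ)).symm v)
      = (WithLp.equiv 2 (Fin n → ℂ)).symm (M *ᵥ v) := rfl

private lemma WithLp.equiv_symm_pi_apply (v : Fin n → ℂ) (i : Fin n) :
    (WithLp.equiv 2 (Fin n → ℂ)).symm v i = v i := rfl

private lemma WithLp.equiv_pi_apply (v : EuclideanSpace ℂ (Fin n)) (i : Fin n) :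
    WithLp.equiv 2 (Fin n → ℂ) v i = v i := rfl

private lemma toLin'_sub_smul_pow (A : Matrix (Fin n) (Fin n) ℂ) (μ : ℂ) (k : ℕ) :
    Matrix.toLin' ((A - μ • 1) ^ k) = (Matrix.toLin' A - μ • 1) ^ k := by
  have h : ∀ M : Matrix (Fin n) (Fin n) ℂ, Matrix.toLin' M = Matrix.toLinAlgEquiv' M := by
    intro M
    apply LinearMap.ext
    intro v
    simp [Matrix.toLin'_apply, Matrix.toLinAlgEquiv'_apply]
  rw [h, map_pow, map_sub, map_smul, map_one, ← h]

private lemma conjTranspose_sub_smul_pow (A : Matrix (Fin n) (Fin n) ℂ) (μ : ℂ) (k : ℕ) :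
    ((A - μ • 1) ^ k).conjTranspose
      = (A.conjTranspose - (starRingEnd ℂ) μ • 1) ^ k := by
  rw [Matrix.conjTranspose_pow, Matrix.conjTranspose_sub, Matrix.conjTranspose_smul,
    Matrix.conjTranspose_one]
  rfl

/-- `x` is in the range of `toLin' M` iff it pairs to zero with everything in the
kernel of `toLin' Mᴴ`. -/
private lemma range_char (M : Matrix (Fin n) (Fin n) ℂ) (x : Fin n → ℂ) :
    x ∈ LinearMap.range (Matrix.toLin' M) ↔
      ∀ w ∈ LinearMap.ker (Matrix.toLin' M.conjTranspose),
        ∑ i, x i * (starRingEnd ℂ) (w i) = 0 := by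
  classical
  set T : EuclideanSpace ℂ (Fin n) →ₗ[ℂ] EuclideanSpace ℂ (Fin n) := Matrix.toEuclideanLin M
    with hT
  have hker : LinearMap.ker (LinearMap.adjoint T) = (LinearMap.range T)ᗮ := by
    ext w
    simp only [LinearMap.mem_ker, Submodule.mem_orthogonal]
    constructor
    · rintro h u ⟨v, rfl⟩
      rw [← LinearMap.adjoint_inner_right, h, inner_zero_right]
    · intro h
      have h2 := h (T (LinearMap.adjoint T w)) ⟨_, rfl⟩
      rwa [← LinearMap.adjoint_inner_right, inner_self_eq_zero] at h2
  have hrange : LinearMap.range T = (LinearMap.ker (LinearMap.adjoint T))ᗮ := by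
    rw [hker, Submodule.orthogonal_orthogonal]
  have hadj : LinearMap.adjoint T = Matrix.toEuclideanLin M.conjTranspose :=
    (Matrix.toEuclideanLin_conjTranspose_eq_adjoint M).symm
  have hx : x ∈ LinearMap.range (Matrix.toLin' M) ↔
      (WithLp.equiv 2 (Fin n → ℂ)).symm x ∈ LinearMap.range T := by
    constructor
    · rintro ⟨y, rfl⟩
      refine ⟨(WithLp.equiv 2 (Fin n → ℂ)).symm y, ?_⟩
      rw [hT, Matrix.toEuclideanLin_apply_piLp_equiv_symm, Matrix.toLin'_apply]
    · rintro ⟨y, hy⟩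
      refine ⟨WithLp.equiv 2 (Fin n → ℂ) y, ?_⟩
      have h1 : T ((WithLp.equiv 2 (Fin n → ℂ)).symm (WithLp.equiv 2 (Fin n → ℂ) y))
          = (WithLp.equiv 2 (Fin n → ℂ)).symm x := by
        rw [Equiv.symm_apply_apply]; exact hy
      rw [hT, Matrix.toEuclideanLin_apply_piLp_equiv_symm] at h1
      have h2 := congrArg (WithLp.equiv 2 (Fin n → ℂ)) h1
      rw [Equiv.apply_symm_apply, Equiv.apply_symm_apply] at h2
      rw [Matrix.toLin'_apply]
      exact h2
  rw [hx, hrange, hadj]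
  constructor
  · intro h w hw
    have hw' : (WithLp.equiv 2 (Fin n → ℂ)).symm w
        ∈ LinearMap.ker (Matrix.toEuclideanLin M.conjTranspose) := by
      rw [LinearMap.mem_ker, Matrix.toEuclideanLin_apply_piLp_equiv_symm]
      rw [LinearMap.mem_ker, Matrix.toLin'_apply] at hw
      rw [hw]
      simp
    have h2 := (Submodule.mem_orthogonal _ _).mp h _ hw'
    rw [PiLp.inner_apply] at h2
    simpa [WithLp.equiv_symm_pi_apply, RCLike.inner_apply, mul_comm] using h2
  · intro h
    rw [Submodule.mem_orthogonal]
    intro w hw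
    have hw' : WithLp.equiv 2 (Fin n → ℂ) w
        ∈ LinearMap.ker (Matrix.toLin' M.conjTranspose) := by
      rw [LinearMap.mem_ker, Matrix.toLin'_apply]
      rw [LinearMap.mem_ker] at hw
      have h1 : Matrix.toEuclideanLin M.conjTranspose
          ((WithLp.equiv 2 (Fin n → ℂ)).symm (WithLp.equiv 2 (Fin n → ℂ) w)) = 0 := by
        rw [Equiv.symm_apply_apply]; exact hw
      rw [Matrix.toEuclideanLin_apply_piLp_equiv_symm] at h1
      have h2 := congrArg (WithLp.equiv 2 (Fin n → ℂ)) h1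
      rw [Equiv.apply_symm_apply] at h2
      simpa using h2
    have h3 := h _ hw'
    rw [PiLp.inner_apply]
    simpa [WithLp.equiv_pi_apply, WithLp.equiv_symm_pi_apply, RCLike.inner_apply,
      mul_comm] using h3

private lemma maxGen_eq_ker (f : Module.End ℂ (Fin n → ℂ)) (μ : ℂ) :
    f.maxGenEigenspace μ = LinearMap.ker ((f - μ • 1) ^ n) := by
  rw [Module.End.maxGenEigenspace_eq_genEigenspace_finrank, Module.finrank_fin_fun,
    Module.End.genEigenspace_nat]

private lemma commute_aux (f : Module.End ℂ (Fin n → ℂ)) (lam : ℂ) (k : ℕ) :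
    Commute f ((f - lam • 1) ^ k) :=
  ((Commute.refl f).sub_right ((Commute.one_right f).smul_right lam)).pow_right k

private lemma maxGen_le_range (f : Module.End ℂ (Fin n → ℂ)) {μ lam : ℂ} (hne : μ ≠ lam) :
    f.maxGenEigenspace μ ≤ LinearMap.range ((f - lam • 1) ^ n) := by
  set g : Module.End ℂ (Fin n → ℂ) := (f - lam • 1) ^ n with hg
  have hmapsTo : Set.MapsTo g ↑(f.maxGenEigenspace μ) ↑(f.maxGenEigenspace μ) :=
    Module.End.mapsTo_maxGenEigenspace_of_comm (commute_aux f lam n) μ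
  set r := LinearMap.restrict g hmapsTo with hr
  have hinj : Function.Injective r := by
    rw [← LinearMap.ker_eq_bot, eq_bot_iff]
    rintro ⟨v, hv⟩ hrv
    rw [LinearMap.mem_ker] at hrv
    have hgv : g v = 0 := by
      have h1 := congrArg Subtype.val hrv
      exact h1
    have hvlam : v ∈ f.maxGenEigenspace lam := by
      rw [maxGen_eq_ker]
      exact hgv
    have hdisj : Disjoint (f.maxGenEigenspace μ) (f.maxGenEigenspace lam) :=
      (Module.End.independent_maxGenEigenspace f).pairwiseDisjoint hne
    have hv0 : v = 0 := Submodule.disjoint_def.mp hdisj v hv hvlam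
    rw [Submodule.mem_bot]
    apply Subtype.ext
    simpa using hv0
  have hsurj : Function.Surjective r := LinearMap.injective_iff_surjective.mp hinj
  intro v hv
  obtain ⟨u, hu⟩ := hsurj ⟨v, hv⟩
  exact ⟨(u : Fin n → ℂ), by exact congrArg Subtype.val hu⟩

private lemma range_le_iSup (f : Module.End ℂ (Fin n → ℂ))
    (hf : ⨆ μ : ℂ, f.maxGenEigenspace μ = ⊤) (lam : ℂ) :
    LinearMap.range ((f - lam • 1) ^ n)
      ≤ ⨆ μ : {μ : ℂ // μ ≠ lam}, f.maxGenEigenspace (μ : ℂ) := by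
  set g : Module.End ℂ (Fin n → ℂ) := (f - lam • 1) ^ n with hg
  have h1 : LinearMap.range g = Submodule.map g ⊤ := (Submodule.map_top g).symm
  rw [h1, ← hf, Submodule.map_iSup]
  apply iSup_le
  intro μ
  by_cases hμ : μ = lam
  · subst hμ
    intro v hv
    rw [Submodule.mem_map] at hv
    obtain ⟨u, hu, rfl⟩ := hv
    rw [maxGen_eq_ker, LinearMap.mem_ker] at hu
    rw [hu]
    exact Submodule.zero_mem _
  · intro v hv
    rw [Submodule.mem_map] at hv
    obtain ⟨u, hu, rfl⟩ := hv
    have hmem : g u ∈ f.maxGenEigenspace μ :=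
      Module.End.mapsTo_maxGenEigenspace_of_comm (commute_aux f lam n) μ hu
    exact le_iSup (fun μ' : {μ' : ℂ // μ' ≠ lam} => f.maxGenEigenspace (μ' : ℂ)) ⟨μ, hμ⟩ hmem

private lemma zero_of_mem (f : Module.End ℂ (Fin n → ℂ)) (s : Finset ℂ) :
    ∀ z : Fin n → ℂ, z ∈ (⨆ μ ∈ s, f.maxGenEigenspace μ) →
      (∀ lam ∈ s, z ∈ ⨆ μ : {μ : ℂ // μ ≠ lam}, f.maxGenEigenspace (μ : ℂ)) → z = 0 := by
  classical
  induction s using Finset.induction_on with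
  | empty =>
    intro z hz _
    simpa using hz
  | @insert a s hns ih =>
    intro z hz hR
    rw [Finset.iSup_insert] at hz
    obtain ⟨u, hu, v, hv, rfl⟩ := Submodule.mem_sup.mp hz
    have hvs : v ∈ ⨆ μ : {μ : ℂ // μ ≠ a}, f.maxGenEigenspace (μ : ℂ) := by
      have hle : (⨆ μ ∈ s, f.maxGenEigenspace μ)
          ≤ ⨆ μ : {μ : ℂ // μ ≠ a}, f.maxGenEigenspace (μ : ℂ) := by
        refine iSup_le fun μ => iSup_le fun hμ => ?_
        exact le_iSup (fun μ' : {μ' : ℂ // μ' ≠ a} => f.maxGenEigenspace (μ' : ℂ))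
          ⟨μ, fun h => hns (h ▸ hμ)⟩
      exact hle hv
    have hzRa : u + v ∈ ⨆ μ : {μ : ℂ // μ ≠ a}, f.maxGenEigenspace (μ : ℂ) :=
      hR a (Finset.mem_insert_self a s)
    have hua : u ∈ ⨆ μ : {μ : ℂ // μ ≠ a}, f.maxGenEigenspace (μ : ℂ) := by
      have : u = (u + v) - v := by ring
      rw [this]
      exact sub_mem hzRa hvs
    have hdisj : Disjoint (f.maxGenEigenspace a)
        (⨆ μ : {μ : ℂ // μ ≠ a}, f.maxGenEigenspace (μ : ℂ)) := by
      have h1 := (Module.End.independent_maxGenEigenspace f) a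
      have h2 : (⨆ μ : {μ : ℂ // μ ≠ a}, f.maxGenEigenspace (μ : ℂ))
          = ⨆ (j : ℂ) (_ : j ≠ a), f.maxGenEigenspace j := iSup_subtype
      rwa [h2]
    have hu0 : u = 0 := Submodule.disjoint_def.mp hdisj u hu hua
    rw [hu0, zero_add]
    exact ih v hv fun lam hlam => by
      have h2 := hR lam (Finset.mem_insert_of_mem hlam)
      rwa [hu0, zero_add] at h2

end Aux

/-- The stable subspace of `ẋ = Ax` (the sum of generalized eigenspaces of `A` over
eigenvalues with negative real part) is the joint zero level set of the generalized
Koopman eigenfunctions `φ(x) = ⟨x, w⟩`, `w ∈ ker((Aᴴ − conj(λ) I)ⁿ)`, associated with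
eigenvalues `λ` of nonnegative real part. -/
theorem stable_subspace_eq_joint_zero_level_set {n : ℕ}
    (A : Matrix (Fin n) (Fin n) ℂ) (x : Fin n → ℂ) :
    x ∈ ⨆ lam : {μ : ℂ // μ.re < 0},
        LinearMap.ker (Matrix.toLin' ((A - (lam : ℂ) • 1) ^ n))
      ↔ ∀ lam : ℂ, 0 ≤ lam.re →
          ∀ w ∈ LinearMap.ker (Matrix.toLin'
              ((A.conjTranspose - (starRingEnd ℂ) lam • 1) ^ n)),
            ∑ i, x i * (starRingEnd ℂ) (w i) = 0 := by
  classical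
  set f : Module.End ℂ (Fin n → ℂ) := Matrix.toLin' A with hf
  have hkerA : ∀ μ : ℂ, LinearMap.ker (Matrix.toLin' ((A - μ • 1) ^ n))
      = f.maxGenEigenspace μ := by
    intro μ
    rw [toLin'_sub_smul_pow, ← maxGen_eq_ker]
  have hRHS : ∀ lam : ℂ,
      (∀ w ∈ LinearMap.ker (Matrix.toLin'
          ((A.conjTranspose - (starRingEnd ℂ) lam • 1) ^ n)),
        ∑ i, x i * (starRingEnd ℂ) (w i) = 0)
      ↔ x ∈ LinearMap.range ((f - lam • 1) ^ n) := by
    intro lam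
    have h1 : (A.conjTranspose - (starRingEnd ℂ) lam • 1) ^ n
        = ((A - lam • 1) ^ n).conjTranspose := (conjTranspose_sub_smul_pow A lam n).symm
    rw [h1, hf, ← toLin'_sub_smul_pow A lam n]
    exact (range_char _ x).symm
  have hgoal_eq : (⨆ lam : {μ : ℂ // μ.re < 0},
      LinearMap.ker (Matrix.toLin' ((A - (lam : ℂ) • 1) ^ n)))
      = ⨆ μ : {μ : ℂ // μ.re < 0}, f.maxGenEigenspace (μ : ℂ) :=
    iSup_congr fun lam => hkerA lam
  constructor
  · intro hx lam hlam
    rw [hRHS lam]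
    have hle : (⨆ lam' : {μ : ℂ // μ.re < 0},
        LinearMap.ker (Matrix.toLin' ((A - (lam' : ℂ) • 1) ^ n)))
        ≤ LinearMap.range ((f - lam • 1) ^ n) := by
      apply iSup_le
      rintro ⟨μ, hμ⟩
      rw [hkerA]
      exact maxGen_le_range f (by rintro rfl; simp only [not_lt.mpr hlam] at hμ)
    exact hle hx
  · intro hx
    have hx' : ∀ lam : ℂ, 0 ≤ lam.re → x ∈ LinearMap.range ((f - lam • 1) ^ n) :=
      fun lam hlam => (hRHS lam).mp (hx lam hlam)
    have htop : ⨆ μ : ℂ, f.maxGenEigenspace μ = ⊤ :=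
      Module.End.iSup_maxGenEigenspace_eq_top f
    have hmem : x ∈ (⨆ μ : {μ : ℂ // μ.re < 0}, f.maxGenEigenspace (μ : ℂ))
        ⊔ (⨆ μ : {μ : ℂ // 0 ≤ μ.re}, f.maxGenEigenspace (μ : ℂ)) := by
      have hle : (⊤ : Submodule ℂ (Fin n → ℂ))
          ≤ (⨆ μ : {μ : ℂ // μ.re < 0}, f.maxGenEigenspace (μ : ℂ))
            ⊔ (⨆ μ : {μ : ℂ // 0 ≤ μ.re}, f.maxGenEigenspace (μ : ℂ)) := by
        rw [← htop]
        apply iSup_le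
        intro μ
        by_cases hμ : μ.re < 0
        · exact le_sup_of_le_left
            (le_iSup (fun μ' : {μ' : ℂ // μ'.re < 0} => f.maxGenEigenspace (μ' : ℂ)) ⟨μ, hμ⟩)
        · exact le_sup_of_le_right
            (le_iSup (fun μ' : {μ' : ℂ // 0 ≤ μ'.re} => f.maxGenEigenspace (μ' : ℂ))
              ⟨μ, not_lt.mp hμ⟩)
      exact hle Submodule.mem_top
    obtain ⟨y, hy, z, hz, hxyz⟩ := Submodule.mem_sup.mp hmem
    rw [hgoal_eq]
    have hyr : ∀ lam : ℂ, 0 ≤ lam.re → y ∈ LinearMap.range ((f - lam • 1) ^ n) := by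
      intro lam hlam
      have hle : (⨆ μ : {μ : ℂ // μ.re < 0}, f.maxGenEigenspace (μ : ℂ))
          ≤ LinearMap.range ((f - lam • 1) ^ n) := by
        apply iSup_le
        rintro ⟨μ, hμ⟩
        exact maxGen_le_range f (by rintro rfl; simp only [not_lt.mpr hlam] at hμ)
      exact hle hy
    have hzr : ∀ lam : ℂ, 0 ≤ lam.re →
        z ∈ ⨆ μ : {μ : ℂ // μ ≠ lam}, f.maxGenEigenspace (μ : ℂ) := by
      intro lam hlam
      have hzrange : z ∈ LinearMap.range ((f - lam • 1) ^ n) := by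
        have : z = x - y := by rw [← hxyz]; ring
        rw [this]
        exact sub_mem (hx' lam hlam) (hyr lam hlam)
      exact range_le_iSup f htop lam hzrange
    obtain ⟨s, hs⟩ := Submodule.mem_iSup_iff_exists_finset.mp hz
    have hzs : z ∈ ⨆ μ ∈ s.image (Subtype.val), f.maxGenEigenspace μ := by
      have hle : (⨆ i ∈ s, f.maxGenEigenspace ((i : {μ : ℂ // 0 ≤ μ.re}) : ℂ))
          ≤ ⨆ μ ∈ s.image (Subtype.val), f.maxGenEigenspace μ := by
        refine iSup_le fun i => iSup_le fun hi => ?_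
        exact le_iSup₂_of_le (i : ℂ) (Finset.mem_image_of_mem _ hi) le_rfl
      exact hle hs
    have hz0 : z = 0 := by
      apply zero_of_mem f (s.image Subtype.val) z hzs
      intro lam hlam
      obtain ⟨i, _, rfl⟩ := Finset.mem_image.mp hlam
      exact hzr _ i.2
    rw [← hxyz, hz0, add_zero]
    exact hy
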